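/- Let S_1,…,S_r be subspaces of a finite-dimensional complex Hilbert space such that any two unit vectors v_i ∈ S_i, v_j ∈ S_j with i ≠ j satisfy |⟨v_i, v_j⟩| ≤ δ, where δ < 1/(2(r−1)). Let P_i be the orthogonal projector onto S_i and P the orthogonal projector onto S_1 + ⋯ + S_r. Then P ≤ ((1−(r−1)δ)/(1−2(r−1)δ)) · Σ_{i=1}^r P_i in the Loewner order. -/

import Mathlib

open scoped InnerProductSpace

/-- The orthogonal projection onto a subspace, as an operator on the whole space. -/
noncomputable def projCLM {E : Type*} [NormedAddCommGroup E] [InnerProductSpace ℂ E]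
    [FiniteDimensional ℂ E] (S : Submodule ℂ E) : E →L[ℂ] E :=
  S.subtypeL.comp (S.orthogonalProjectionOnto)

section Aux

variable {E : Type*} [NormedAddCommGroup E] [InnerProductSpace ℂ E] [FiniteDimensional ℂ E]

lemma projCLM_isSelfAdjoint (S : Submodule ℂ E) : IsSelfAdjoint (projCLM S) :=
  isSelfAdjoint_starProjection S

lemma projCLM_apply_mem (S : Submodule ℂ E) (x : E) : projCLM S x ∈ S :=
  (S.orthogonalProjectionOnto x).2

lemma projCLM_inner_right_of_mem (S : Submodule ℂ E) (x : E) {w : E} (hw : w ∈ S) :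
    ⟪projCLM S x, w⟫_ℂ = ⟪x, w⟫_ℂ := by
  have h : ⟪x - projCLM S x, w⟫_ℂ = 0 := S.starProjection_inner_eq_zero x w hw
  rw [inner_sub_left] at h
  linear_combination -h

lemma re_inner_projCLM_self (S : Submodule ℂ E) (x : E) :
    (⟪projCLM S x, x⟫_ℂ).re = ‖projCLM S x‖ ^ 2 := by
  have h := projCLM_inner_right_of_mem S x (projCLM_apply_mem S x)
  have h2 : ⟪projCLM S x, x⟫_ℂ = ⟪projCLM S x, projCLM S x⟫_ℂ := by
    rw [← inner_conj_symm, ← h, inner_conj_symm]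
  rw [h2, inner_self_eq_norm_sq_to_K]
  norm_cast

lemma re_inner_real_smul (c : ℝ) (v w : E) :
    (⟪(c • v : E), w⟫_ℂ).re = c * (⟪v, w⟫_ℂ).re := by
  rw [← algebraMap_smul ℂ c v]
  rw [inner_smul_left]
  simp [Complex.conj_ofReal, Complex.mul_re]

/-- Scale the unit-vector overlap bound to general vectors. -/
lemma overlap_bound {δ : ℝ} (hδ0 : 0 ≤ δ) {v w : E}
    (hv2 : ∀ (c d : ℂ), ‖c • v‖ = 1 → ‖d • w‖ = 1 → ‖⟪c • v, d • w⟫_ℂ‖ ≤ δ) :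
    ‖⟪v, w⟫_ℂ‖ ≤ δ * ‖v‖ * ‖w‖ := by
  rcases eq_or_ne v 0 with rfl | hv
  · simp [hδ0]
  rcases eq_or_ne w 0 with rfl | hw
  · simp
  have hvn : (0:ℝ) < ‖v‖ := norm_pos_iff.mpr hv
  have hwn : (0:ℝ) < ‖w‖ := norm_pos_iff.mpr hw
  have key := hv2 ((‖v‖:ℂ)⁻¹) ((‖w‖:ℂ)⁻¹) ?_ ?_
  · rw [inner_smul_left, inner_smul_right] at key
    simp only [norm_mul, norm_inv, Complex.norm_conj, Complex.norm_real, Real.norm_eq_abs,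
      abs_of_pos hvn, abs_of_pos hwn] at key
    rw [inv_mul_le_iff₀ hvn, inv_mul_le_iff₀ hwn] at key
    calc ‖⟪v, w⟫_ℂ‖ ≤ ‖w‖ * (‖v‖ * δ) := key
      _ = δ * ‖v‖ * ‖w‖ := by ring
  · rw [norm_smul]
    simp [abs_of_pos hvn, inv_mul_cancel₀ hvn.ne']
  · rw [norm_smul]
    simp [abs_of_pos hwn, inv_mul_cancel₀ hwn.ne']

end Aux

set_option maxHeartbeats 1000000 in
/-- Lemma 3 -/
theorem projector_sum_bound {E : Type*} [NormedAddCommGroup E] [InnerProductSpace ℂ E]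
    [FiniteDimensional ℂ E] {r : ℕ} (hr : 2 ≤ r)
    (S : Fin r → Submodule ℂ E) (δ : ℝ) (hδ0 : 0 ≤ δ)
    (hδ : δ < 1 / (2 * ((r : ℝ) - 1)))
    (hover : ∀ i j, i ≠ j → ∀ v ∈ S i, ∀ w ∈ S j,
      ‖v‖ = 1 → ‖w‖ = 1 → ‖⟪v, w⟫_ℂ‖ ≤ δ) :
    (((1 - ((r : ℝ) - 1) * δ) / (1 - 2 * ((r : ℝ) - 1) * δ)) • (∑ i, projCLM (S i)) -
        projCLM (⨆ i, S i)).IsPositive := by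
  have hr1 : (1:ℝ) ≤ (r:ℝ) - 1 := by
    have : (2:ℝ) ≤ (r:ℝ) := by exact_mod_cast hr
    linarith
  have hr1pos : (0:ℝ) < (r:ℝ) - 1 := by linarith
  set a₀ : ℝ := ((r : ℝ) - 1) * δ with ha₀
  set c : ℝ := (1 - a₀) / (1 - 2 * a₀) with hc
  have hconst : (1 - ((r:ℝ) - 1) * δ) / (1 - 2 * ((r:ℝ) - 1) * δ) = c := by
    rw [hc, ha₀]; ring_nf
  have ha₀0 : 0 ≤ a₀ := mul_nonneg (by linarith) hδ0
  have ha₀half : 2 * a₀ < 1 := by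
    rw [ha₀]
    have := (lt_div_iff₀ (by positivity : (0:ℝ) < 2 * ((r:ℝ)-1))).mp hδ
    nlinarith
  have h2a : (0:ℝ) < 1 - 2 * a₀ := by linarith
  have h1a : (0:ℝ) < 1 - a₀ := by linarith
  have hcpos : 0 ≤ c := le_of_lt (div_pos h1a h2a)
  rw [hconst]
  -- generalized overlap bound
  have hover' : ∀ i j, i ≠ j → ∀ v ∈ S i, ∀ w ∈ S j,
      ‖⟪v, w⟫_ℂ‖ ≤ δ * ‖v‖ * ‖w‖ := by
    intro i j hij v hv w hw
    refine overlap_bound hδ0 ?_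
    intro cc dd h1 h2
    exact hover i j hij _ (Submodule.smul_mem _ _ hv) _ (Submodule.smul_mem _ _ hw) h1 h2
  constructor
  · -- self-adjointness
    have h1 : IsSelfAdjoint (∑ i, projCLM (S i)) := by
      apply Finset.sum_induction _ IsSelfAdjoint
      · exact fun _ _ ha hb => ha.add hb
      · exact star_zero _
      · exact fun i _ => projCLM_isSelfAdjoint (S i)
    intro x y
    have hs1 := ContinuousLinearMap.isSelfAdjoint_iff_isSymmetric.mp h1 x y
    have hs2 := ContinuousLinearMap.isSelfAdjoint_iff_isSymmetric.mp
      (projCLM_isSelfAdjoint (⨆ i, S i)) x y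
    simp only [ContinuousLinearMap.coe_coe, ContinuousLinearMap.sub_apply,
      ContinuousLinearMap.smul_apply, inner_sub_left, inner_sub_right] at *
    rw [← algebraMap_smul ℂ c ((∑ i, projCLM (S i)) x),
      ← algebraMap_smul ℂ c ((∑ i, projCLM (S i)) y)]
    simp only [Algebra.algebraMap_self, Complex.coe_algebraMap, inner_smul_left,
      inner_smul_right, Complex.conj_ofReal, hs1, hs2]
  · -- positivity
    intro x
    rw [ContinuousLinearMap.reApplyInnerSelf_apply]
    set u : E := projCLM (⨆ i, S i) x with hu
    set A : ℝ := ∑ i, ‖projCLM (S i) x‖ ^ 2 with hA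
    set N : ℝ := ‖u‖ ^ 2 with hN
    have hA0 : 0 ≤ A := Finset.sum_nonneg fun i _ => sq_nonneg _
    have hN0 : 0 ≤ N := sq_nonneg _
    have key : RCLike.re ⟪(c • (∑ i, projCLM (S i)) - projCLM (⨆ i, S i)) x, x⟫_ℂ
        = c * A - N := by
      rw [ContinuousLinearMap.sub_apply, ContinuousLinearMap.smul_apply,
        ContinuousLinearMap.sum_apply, inner_sub_left]
      rw [RCLike.re_to_complex, Complex.sub_re, re_inner_real_smul, sum_inner,
        Complex.re_sum]
      rw [← hu, re_inner_projCLM_self]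
      congr 1
      rw [hA]
      congr 1
      exact Finset.sum_congr rfl fun i _ => re_inner_projCLM_self (S i) x
    rw [key]
    rw [sub_nonneg]
    -- decomposition of u
    have humem : u ∈ ⨆ i, S i := projCLM_apply_mem _ x
    rw [Submodule.mem_iSup_iff_exists_finsupp] at humem
    obtain ⟨f, hf, hfs⟩ := humem
    have hsum : ∑ i, f i = u := by
      rw [← hfs, Finsupp.sum_fintype]
      simp
    set B : ℝ := ∑ i, ‖f i‖ ^ 2 with hB
    have hB0 : 0 ≤ B := Finset.sum_nonneg fun i _ => sq_nonneg _
    -- step 1 : N ≤ ∑ aᵢbᵢ and hence N² ≤ A * B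
    have step1 : N ≤ ∑ i, ‖projCLM (S i) x‖ * ‖f i‖ := by
      have h1 : (N : ℝ) = (⟪u, u⟫_ℂ).re := by
        rw [inner_self_eq_norm_sq_to_K]; norm_cast
      have h2 : ⟪u, u⟫_ℂ = ∑ i, ⟪u, f i⟫_ℂ := by rw [← inner_sum, hsum]
      have h3 : ∀ i, ⟪u, f i⟫_ℂ = ⟪projCLM (S i) x, f i⟫_ℂ := by
        intro i
        rw [hu, projCLM_inner_right_of_mem _ x (Submodule.mem_iSup_of_mem i (hf i)),
          projCLM_inner_right_of_mem _ x (hf i)]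
      rw [h1, h2, Complex.re_sum]
      apply Finset.sum_le_sum
      intro i _
      rw [h3 i]
      calc (⟪projCLM (S i) x, f i⟫_ℂ).re ≤ ‖⟪projCLM (S i) x, f i⟫_ℂ‖ :=
            Complex.re_le_norm _
        _ ≤ ‖projCLM (S i) x‖ * ‖f i‖ := by
            exact norm_inner_le_norm _ _
    have step1' : N ^ 2 ≤ A * B := by
      calc N ^ 2 ≤ (∑ i, ‖projCLM (S i) x‖ * ‖f i‖) ^ 2 := by
            apply pow_le_pow_left₀ hN0 step1
        _ ≤ A * B := Finset.sum_mul_sq_le_sq_mul_sq _ _ _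
    -- step 2 : (1 - a₀) * B ≤ N
    have step2 : (1 - a₀) * B ≤ N := by
      have h1 : (N : ℝ) = ∑ i, ∑ j, (⟪f i, f j⟫_ℂ).re := by
        have hNu : (N : ℝ) = (⟪u, u⟫_ℂ).re := by
          rw [inner_self_eq_norm_sq_to_K]; norm_cast
        have hdouble : ⟪(∑ i, f i : E), (∑ j, f j : E)⟫_ℂ = ∑ i, ∑ j, ⟪f i, f j⟫_ℂ := by
          rw [sum_inner]
          exact Finset.sum_congr rfl fun i _ => inner_sum _ _ _
        rw [hNu, ← hsum, hdouble, Complex.re_sum]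
        exact Finset.sum_congr rfl fun i _ => Complex.re_sum _ _
      have hdiag : ∀ i : Fin r, (⟪f i, f i⟫_ℂ).re = ‖f i‖ ^ 2 := by
        intro i; rw [inner_self_eq_norm_sq_to_K]; norm_cast
      -- lower bound each row
      have key2 : ∀ i : Fin r, ‖f i‖^2 - δ * ∑ j ∈ Finset.univ.erase i, ‖f i‖ * ‖f j‖
          ≤ ∑ j, (⟪f i, f j⟫_ℂ).re := by
        intro i
        rw [← Finset.add_sum_erase _ _ (Finset.mem_univ i), hdiag i, Finset.mul_sum]
        have hterm : ∀ j ∈ Finset.univ.erase i, -(δ * (‖f i‖ * ‖f j‖)) ≤ (⟪f i, f j⟫_ℂ).re := by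
          intro j hj
          have hij : i ≠ j := (Finset.ne_of_mem_erase hj).symm
          have h := hover' i j hij (f i) (hf i) (f j) (hf j)
          have h4 := abs_le.mp (le_trans (Complex.abs_re_le_norm ⟪f i, f j⟫_ℂ) h)
          linarith [h4.1]
        have hs := Finset.sum_le_sum hterm
        rw [Finset.sum_neg_distrib] at hs
        linarith [hs]
      have hsum2 : ∑ i, (‖f i‖^2 - δ * ∑ j ∈ Finset.univ.erase i, ‖f i‖ * ‖f j‖)
          ≤ ∑ i, ∑ j, (⟪f i, f j⟫_ℂ).re := Finset.sum_le_sum fun i _ => key2 i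
      -- bound the cross term
      have cross : ∑ i, ∑ j ∈ Finset.univ.erase i, ‖f i‖ * ‖f j‖ ≤ ((r:ℝ) - 1) * B := by
        have e1 : ∀ i : Fin r, ∑ j ∈ Finset.univ.erase i, ‖f i‖ * ‖f j‖
            = ‖f i‖ * ((∑ j, ‖f j‖) - ‖f i‖) := by
          intro i
          rw [← Finset.mul_sum, Finset.sum_erase_eq_sub (Finset.mem_univ i)]
        have e2 : ∑ i, ∑ j ∈ Finset.univ.erase i, ‖f i‖ * ‖f j‖
            = (∑ i, ‖f i‖) ^ 2 - B := by
          calc ∑ i, ∑ j ∈ Finset.univ.erase i, ‖f i‖ * ‖f j‖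
              = ∑ i, (‖f i‖ * (∑ j, ‖f j‖) - ‖f i‖ * ‖f i‖) := by
                refine Finset.sum_congr rfl fun i _ => ?_
                rw [e1 i, mul_sub]
            _ = (∑ i, ‖f i‖) ^ 2 - B := by
                rw [Finset.sum_sub_distrib, ← Finset.sum_mul, hB, sq]
                congr 1
                exact Finset.sum_congr rfl fun i _ => (pow_two _).symm
        have e3 : (∑ i, ‖f i‖) ^ 2 ≤ (r : ℝ) * B := by
          have := sq_sum_le_card_mul_sum_sq (s := (Finset.univ : Finset (Fin r)))
            (f := fun i => ‖f i‖)
          simpa [hB] using this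
        rw [e2]
        linarith
      have expand : ∑ i, (‖f i‖^2 - δ * ∑ j ∈ Finset.univ.erase i, ‖f i‖ * ‖f j‖)
          = B - δ * ∑ i, ∑ j ∈ Finset.univ.erase i, ‖f i‖ * ‖f j‖ := by
        rw [Finset.sum_sub_distrib, ← Finset.mul_sum, hB]
      rw [h1] at *
      rw [expand] at hsum2
      nlinarith [mul_le_mul_of_nonneg_left cross hδ0]
    -- combine
    rcases eq_or_lt_of_le hN0 with hNz | hNpos
    · rw [← hNz]
      exact mul_nonneg hcpos hA0
    have h4 : (1 - a₀) * N ^ 2 ≤ A * N := by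
      calc (1 - a₀) * N ^ 2 ≤ (1 - a₀) * (A * B) := by nlinarith
        _ = A * ((1 - a₀) * B) := by ring
        _ ≤ A * N := by nlinarith
    have h5 : (1 - a₀) * N ≤ A := by nlinarith
    rw [hc, div_mul_eq_mul_div, le_div_iff₀ h2a]
    nlinarith [mul_le_mul_of_nonneg_left h5 h1a.le, sq_nonneg a₀]
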